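/- With F(x) := −log(x)/√3 − (1/√3)·artanh(√3·cos(x)/√(4 − cos(x)²)), one has lim_{n→∞} ∫_0^{π/2} (1/(sin(x)·√(4 − cos(x)²)) − 1/(√3·x)) · sin(nx)² dx = (1/2)·(F(π/2) − lim_{x→0⁺} F(x)) = (1/(2√3))·log(2√3/π), where lim_{x→0⁺} F(x) = −log(√3)/√3 and F(π/2) = −log(π/2)/√3. -/

import Mathlib

open Real Set Filter intervalIntegral

/-- The inverse hyperbolic tangent. -/
noncomputable def artanh (y : ℝ) : ℝ := (1 / 2) * Real.log ((1 + y) / (1 - y))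

/-- The antiderivative `F(x) = -log(x)/√3 - (1/√3)·artanh(√3·cos x/√(4 - cos²x))`. -/
noncomputable def triAntideriv (x : ℝ) : ℝ :=
  -Real.log x / Real.sqrt 3
    - (1 / Real.sqrt 3) * _root_.artanh (Real.sqrt 3 * Real.cos x / Real.sqrt (4 - Real.cos x ^ 2))

noncomputable def fI (x : ℝ) : ℝ :=
  1 / (Real.sin x * Real.sqrt (4 - Real.cos x ^ 2)) - 1 / (Real.sqrt 3 * x)

lemma sqrt3_pos : (0:ℝ) < Real.sqrt 3 := Real.sqrt_pos.2 (by norm_num)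
lemma sqrt3_sq : Real.sqrt 3 ^ 2 = 3 := Real.sq_sqrt (by norm_num)

lemma four_sub_pos (x : ℝ) : 0 < 4 - Real.cos x ^ 2 := by
  nlinarith [Real.neg_one_le_cos x, Real.cos_le_one x]

lemma rt_pos (x : ℝ) : 0 < Real.sqrt (4 - Real.cos x ^ 2) :=
  Real.sqrt_pos.2 (four_sub_pos x)

lemma rt_sq (x : ℝ) : Real.sqrt (4 - Real.cos x ^ 2) ^ 2 = 4 - Real.cos x ^ 2 :=
  Real.sq_sqrt (four_sub_pos x).le

-- g < 1 when cos x < 1 ; g > -1 when cos x > -1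
lemma g_lt_one {x : ℝ} (h : Real.cos x < 1) (h' : -1 < Real.cos x) :
    Real.sqrt 3 * Real.cos x / Real.sqrt (4 - Real.cos x ^ 2) < 1 := by
  rw [div_lt_one (rt_pos x)]
  nlinarith [rt_sq x, rt_pos x, sqrt3_sq, sqrt3_pos]

lemma neg_one_lt_g {x : ℝ} (h : Real.cos x < 1) (h' : -1 < Real.cos x) :
    -1 < Real.sqrt 3 * Real.cos x / Real.sqrt (4 - Real.cos x ^ 2) := by
  rw [lt_div_iff₀ (rt_pos x)]
  nlinarith [rt_sq x, rt_pos x, sqrt3_sq, sqrt3_pos]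

lemma hasDerivAt_triAntideriv {x : ℝ} (hx : x ∈ Ioo 0 (π/2)) :
    HasDerivAt triAntideriv (fI x) x := by
  obtain ⟨hx0, hxpi⟩ := hx
  have hpi := Real.pi_pos
  have hs : 0 < Real.sin x := Real.sin_pos_of_pos_of_lt_pi hx0 (by linarith)
  have hc0 : 0 < Real.cos x := Real.cos_pos_of_mem_Ioo ⟨by linarith, hxpi⟩
  have hc1 : Real.cos x < 1 := by nlinarith [Real.sin_sq_add_cos_sq x]
  have hr := rt_pos x
  have hgu := g_lt_one hc1 (by linarith)
  have hgl := neg_one_lt_g hc1 (by linarith)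
  set g : ℝ → ℝ := fun y => Real.sqrt 3 * Real.cos y / Real.sqrt (4 - Real.cos y ^ 2) with hgdef
  have h1pg : 0 < 1 + g x := by simp only [hgdef]; linarith
  have h1mg : 0 < 1 - g x := by simp only [hgdef]; linarith
  have hu : HasDerivAt (fun y => 4 - Real.cos y ^ 2) (2 * Real.cos x * Real.sin x) x := by
    have h := ((Real.hasDerivAt_cos x).pow 2).const_sub 4
    convert h using 1
    · rfl
    · rfl
    · rfl
    · simp only [Nat.cast_ofNat, Nat.reduceSub, pow_one]; ring
  have hrd : HasDerivAt (fun y => Real.sqrt (4 - Real.cos y ^ 2))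
      (2 * Real.cos x * Real.sin x / (2 * Real.sqrt (4 - Real.cos x ^ 2))) x :=
    hu.sqrt (four_sub_pos x).ne'
  have hgd : HasDerivAt g
      ((Real.sqrt 3 * -Real.sin x * Real.sqrt (4 - Real.cos x ^ 2) -
        Real.sqrt 3 * Real.cos x *
          (2 * Real.cos x * Real.sin x / (2 * Real.sqrt (4 - Real.cos x ^ 2)))) /
        Real.sqrt (4 - Real.cos x ^ 2) ^ 2) x :=
    ((Real.hasDerivAt_cos x).const_mul (Real.sqrt 3)).div hrd hr.ne'
  set G' := (Real.sqrt 3 * -Real.sin x * Real.sqrt (4 - Real.cos x ^ 2) -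
        Real.sqrt 3 * Real.cos x *
          (2 * Real.cos x * Real.sin x / (2 * Real.sqrt (4 - Real.cos x ^ 2)))) /
        Real.sqrt (4 - Real.cos x ^ 2) ^ 2 with hG'
  have hA : HasDerivAt (fun y => -Real.log y / Real.sqrt 3 -
      (1 / Real.sqrt 3) * ((1/2) * (Real.log (1 + g y) - Real.log (1 - g y))))
      (-(1/x) / Real.sqrt 3 -
        (1 / Real.sqrt 3) * ((1/2) * (G' / (1 + g x) - -G' / (1 - g x)))) x := by
    have hl : HasDerivAt (fun y => -Real.log y / Real.sqrt 3) (-(1/x) / Real.sqrt 3) x := by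
      simpa [one_div] using (((Real.hasDerivAt_log hx0.ne').neg).div_const (Real.sqrt 3))
    have h1 : HasDerivAt (fun y => Real.log (1 + g y)) (G' / (1 + g x)) x :=
      HasDerivAt.log (hgd.const_add 1) h1pg.ne'
    have h2 : HasDerivAt (fun y => Real.log (1 - g y)) (-G' / (1 - g x)) x := by
      have := HasDerivAt.log (hgd.const_sub 1) h1mg.ne'
      simpa using this
    exact hl.sub (((h1.sub h2).const_mul (1/2:ℝ)).const_mul (1 / Real.sqrt 3))
  have heq : triAntideriv =ᶠ[nhds x] (fun y => -Real.log y / Real.sqrt 3 -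
      (1 / Real.sqrt 3) * ((1/2) * (Real.log (1 + g y) - Real.log (1 - g y)))) := by
    filter_upwards [isOpen_Ioo.mem_nhds (⟨hx0, hxpi⟩ : x ∈ Ioo 0 (π/2))] with y hy
    obtain ⟨hy0, hypi⟩ := hy
    have hys : 0 < Real.sin y := Real.sin_pos_of_pos_of_lt_pi hy0 (by linarith)
    have hyc0 : 0 < Real.cos y := Real.cos_pos_of_mem_Ioo ⟨by linarith, hypi⟩
    have hyc1 : Real.cos y < 1 := by nlinarith [Real.sin_sq_add_cos_sq y]
    have h1 : 0 < 1 + g y := by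
      have := neg_one_lt_g hyc1 (by linarith); simp only [hgdef]; linarith
    have h2 : 0 < 1 - g y := by
      have := g_lt_one hyc1 (by linarith); simp only [hgdef]; linarith
    unfold triAntideriv _root_.artanh
    rw [Real.log_div h1.ne' h2.ne']
  have := (hA.congr_of_eventuallyEq heq)
  convert this using 1
  · rfl
  · rfl
  have hr2 := rt_sq x
  have ht2 := sqrt3_sq
  have hs2 : Real.sin x ^ 2 = 1 - Real.cos x ^ 2 := by nlinarith [Real.sin_sq_add_cos_sq x]
  have hG2 : G' = -(4 * Real.sqrt 3 * Real.sin x) / Real.sqrt (4 - Real.cos x ^ 2) ^ 3 := by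
    rw [hG']
    field_simp
    linear_combination (-1:ℝ) * hr2
  have hp : Real.sqrt (4 - Real.cos x ^ 2) + Real.sqrt 3 * Real.cos x ≠ 0 := by positivity
  have hm : Real.sqrt (4 - Real.cos x ^ 2) - Real.sqrt 3 * Real.cos x ≠ 0 := by
    have := g_lt_one hc1 (by linarith)
    rw [div_lt_one hr] at this
    linarith
  have hsum : G' / (1 + g x) - -G' / (1 - g x)
      = -2 * Real.sqrt 3 / (Real.sin x * Real.sqrt (4 - Real.cos x ^ 2)) := by
    rw [hG2]
    simp only [hgdef]
    rw [show (1:ℝ) + Real.sqrt 3 * Real.cos x / Real.sqrt (4 - Real.cos x ^ 2)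
        = (Real.sqrt (4 - Real.cos x ^ 2) + Real.sqrt 3 * Real.cos x) / Real.sqrt (4 - Real.cos x ^ 2)
        by field_simp,
      show (1:ℝ) - Real.sqrt 3 * Real.cos x / Real.sqrt (4 - Real.cos x ^ 2)
        = (Real.sqrt (4 - Real.cos x ^ 2) - Real.sqrt 3 * Real.cos x) / Real.sqrt (4 - Real.cos x ^ 2)
        by field_simp]
    rw [div_div_eq_mul_div, div_div_eq_mul_div]
    field_simp
    linear_combination (-8*Real.sqrt (4 - Real.cos x ^ 2)) * hs2
      + (2*Real.sqrt (4 - Real.cos x ^ 2)) * hr2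
      + (-2*Real.sqrt (4 - Real.cos x ^ 2) * Real.cos x^2) * ht2
  rw [hsum]
  simp only [fI]
  field_simp
  ring

lemma continuous_gfun : Continuous (fun x => Real.sqrt 3 * Real.cos x / Real.sqrt (4 - Real.cos x ^ 2)) := by
  apply Continuous.div (by continuity) (by continuity)
  exact fun x => (rt_pos x).ne'

lemma tendsto_triAntideriv_zero :
    Tendsto triAntideriv (nhdsWithin 0 (Set.Ioi 0))
      (nhds (-Real.log (Real.sqrt 3) / Real.sqrt 3)) := by
  set g : ℝ → ℝ := fun y => Real.sqrt 3 * Real.cos y / Real.sqrt (4 - Real.cos y ^ 2) with hgdef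
  set h : ℝ → ℝ := fun x => (1 / Real.sqrt 3) * (Real.log (Real.sin x) - Real.log x)
      - (1 / (2 * Real.sqrt 3)) * Real.log ((1 + g x) ^ 2 * (4 - Real.cos x ^ 2) / 4) with hhdef
  have hpi := Real.pi_pos
  have heq : triAntideriv =ᶠ[nhdsWithin 0 (Set.Ioi 0)] h := by
    filter_upwards [Ioo_mem_nhdsGT_of_mem (by constructor <;> [rfl; linarith] : (0:ℝ) ∈ Ico 0 (π/2))] with x hx
    obtain ⟨hx0, hxpi⟩ := hx
    have hs : 0 < Real.sin x := Real.sin_pos_of_pos_of_lt_pi hx0 (by linarith)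
    have hc0 : 0 < Real.cos x := Real.cos_pos_of_mem_Ioo ⟨by linarith, hxpi⟩
    have hc1 : Real.cos x < 1 := by nlinarith [Real.sin_sq_add_cos_sq x]
    have hr := rt_pos x
    have hr2 := rt_sq x
    have ht2 := sqrt3_sq
    have hs2 : Real.sin x ^ 2 = 1 - Real.cos x ^ 2 := by nlinarith [Real.sin_sq_add_cos_sq x]
    have h1pg : 0 < 1 + g x := by
      have := neg_one_lt_g hc1 (by linarith); simp only [hgdef]; linarith
    have h1mg : 0 < 1 - g x := by
      have := g_lt_one hc1 (by linarith); simp only [hgdef]; linarith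
    have key' : (1 - g x) * ((1 + g x) * (4 - Real.cos x ^ 2)) = 4 * Real.sin x ^ 2 := by
      simp only [hgdef]
      field_simp
      linear_combination (4 - Real.cos x ^ 2 - 4 * Real.sin x ^ 2) * hr2
        - (Real.cos x ^ 2 * (4 - Real.cos x ^ 2)) * ht2
        - (4 * (4 - Real.cos x ^ 2)) * hs2
    have key : (1 + g x) / (1 - g x)
        = (1 + g x) ^ 2 * (4 - Real.cos x ^ 2) / 4 / Real.sin x ^ 2 := by
      rw [div_eq_div_iff h1mg.ne' (pow_ne_zero 2 hs.ne')]
      linear_combination (-(1 + g x) / 4) * key'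
    have hpos1 : 0 < (1 + g x) ^ 2 * (4 - Real.cos x ^ 2) / 4 :=
      div_pos (mul_pos (pow_pos h1pg 2) (four_sub_pos x)) (by norm_num)
    unfold triAntideriv _root_.artanh
    simp only [hhdef, ← hgdef]
    rw [key, Real.log_div hpos1.ne' (pow_ne_zero 2 hs.ne'), Real.log_pow]
    push_cast
    ring
  rw [tendsto_congr' heq]
  have T1 : Tendsto (fun x => Real.log (Real.sin x) - Real.log x)
      (nhdsWithin 0 (Set.Ioi 0)) (nhds 0) := by
    have hslope : Tendsto (fun x : ℝ => Real.sin x / x) (nhdsWithin 0 (Set.Ioi 0)) (nhds 1) := by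
      have h := (hasDerivAt_iff_tendsto_slope).1 (Real.hasDerivAt_sin 0)
      rw [Real.cos_zero] at h
      have : Tendsto (slope Real.sin 0) (nhdsWithin 0 (Set.Ioi 0)) (nhds 1) :=
        h.mono_left (nhdsWithin_mono 0 (fun y hy => ne_of_gt hy))
      refine this.congr' ?_
      filter_upwards [self_mem_nhdsWithin] with y hy
      simp [slope_def_field, Real.sin_zero, div_eq_div_iff]
    have hlog : Tendsto (fun x : ℝ => Real.log (Real.sin x / x))
        (nhdsWithin 0 (Set.Ioi 0)) (nhds 0) := by
      have := (Real.continuousAt_log (by norm_num : (1:ℝ) ≠ 0)).tendsto.comp hslope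
      simpa [Function.comp_def] using this
    refine hlog.congr' ?_
    filter_upwards [Ioo_mem_nhdsGT_of_mem (by constructor <;> [rfl; linarith] : (0:ℝ) ∈ Ico 0 (π/2))] with x hx
    have hs : 0 < Real.sin x := Real.sin_pos_of_pos_of_lt_pi hx.1 (by linarith [hx.2])
    rw [Real.log_div hs.ne' hx.1.ne']
  have T2 : Tendsto (fun x => Real.log ((1 + g x) ^ 2 * (4 - Real.cos x ^ 2) / 4))
      (nhdsWithin 0 (Set.Ioi 0)) (nhds (Real.log 3)) := by
    have hval : ((1 + g 0) ^ 2 * (4 - Real.cos 0 ^ 2) / 4) = 3 := by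
      simp only [hgdef]
      rw [Real.cos_zero]
      norm_num
    have hinner : Continuous (fun x => (1 + g x) ^ 2 * (4 - Real.cos x ^ 2) / 4) :=
      (((continuous_const.add continuous_gfun).pow 2).mul
          (continuous_const.sub (Real.continuous_cos.pow 2))).div_const 4
    rw [← hval]
    simpa only [Function.comp_def] using
      ((Real.continuousAt_log (by rw [hval]; norm_num)).comp
        hinner.continuousAt).tendsto.mono_left (nhdsWithin_le_nhds)
  have hT := (T1.const_mul (1 / Real.sqrt 3)).sub (T2.const_mul (1 / (2 * Real.sqrt 3)))
  simp only [hhdef]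
  rw [show -Real.log (Real.sqrt 3) / Real.sqrt 3
      = 1 / Real.sqrt 3 * 0 - 1 / (2 * Real.sqrt 3) * Real.log 3 from by
    rw [Real.log_sqrt (by norm_num)]; ring]
  exact hT

lemma triAntideriv_pi_div_two : triAntideriv (π / 2) = -Real.log (π / 2) / Real.sqrt 3 := by
  unfold triAntideriv _root_.artanh
  rw [Real.cos_pi_div_two]
  norm_num

lemma half_diff_eq : (1 / 2) * (triAntideriv (π / 2) - (-Real.log (Real.sqrt 3) / Real.sqrt 3))
    = (1 / (2 * Real.sqrt 3)) * Real.log (2 * Real.sqrt 3 / π) := by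
  have hpi := Real.pi_pos
  rw [triAntideriv_pi_div_two,
    show (2 * Real.sqrt 3 / π) = Real.sqrt 3 / (π / 2) by field_simp,
    Real.log_div sqrt3_pos.ne' (by positivity)]
  set a := Real.log (π / 2)
  set b := Real.log (Real.sqrt 3)
  set t := Real.sqrt 3 with htdef
  have ht := sqrt3_pos
  have ht2 := sqrt3_sq
  field_simp
  ring

set_option maxHeartbeats 1000000 in
lemma fI_bound {x : ℝ} (hx : x ∈ Ioc 0 (π/2)) : |fI x| ≤ 3 := by
  obtain ⟨hx0, hxpi⟩ := hx
  have hpi := Real.pi_pos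
  have hpile : π ≤ 4 := by linarith [Real.pi_le_four]
  have hpige : 3 ≤ π := by linarith [Real.pi_gt_three]
  have hs : 0 < Real.sin x := Real.sin_pos_of_pos_of_lt_pi hx0 (by linarith)
  have hsx : Real.sin x ≤ x := Real.sin_le hx0.le
  have hsx2 : 2 / π * x ≤ Real.sin x := Real.mul_le_sin hx0.le hxpi
  have hr := rt_pos x
  have hr2 := rt_sq x
  have ht2 := sqrt3_sq
  have ht := sqrt3_pos
  have hs2 : Real.sin x ^ 2 = 1 - Real.cos x ^ 2 := by nlinarith [Real.sin_sq_add_cos_sq x]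
  have hform : fI x = (Real.sqrt 3 * x - Real.sin x * Real.sqrt (4 - Real.cos x ^ 2)) /
      (Real.sin x * Real.sqrt (4 - Real.cos x ^ 2) * (Real.sqrt 3 * x)) := by
    unfold fI
    field_simp
  rw [hform]
  set s := Real.sin x with hsdef
  set r := Real.sqrt (4 - Real.cos x ^ 2) with hrdef
  set t := Real.sqrt 3 with htdef
  clear_value s r t
  have hrs2 : r ^ 2 = 3 + s ^ 2 := by rw [hr2]; linarith [hs2]
  have hxs3 : x - s ≤ x ^ 3 := by
    rcases le_or_gt x 1 with h1 | h1
    · nlinarith [Real.sin_gt_sub_cube hx0, hsdef]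
    · nlinarith [mul_lt_mul_of_pos_left h1 hx0, mul_lt_mul_of_pos_left h1 (mul_pos hx0 hx0), hs]
  have hrub : r ≤ t + s ^ 2 * t / 6 := by
    have h : r ^ 2 ≤ (t + s ^ 2 * t / 6) ^ 2 := by
      rw [hrs2]
      nlinarith [sq_nonneg (s ^ 2), sq_nonneg s, sq_nonneg (s * t)]
    have ha : (0:ℝ) < t + s ^ 2 * t / 6 := by positivity
    nlinarith [h, ha, hr, sq_nonneg (r - (t + s ^ 2 * t / 6))]
  have hrlb : t ≤ r := by nlinarith [hr, ht, sq_nonneg (r - t)]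
  have hnub : t * x - s * r ≤ t * x ^ 3 := by
    linarith [mul_le_mul_of_nonneg_left hrlb hs.le, mul_le_mul_of_nonneg_left hxs3 ht.le]
  have hnlb : -(t * x ^ 3) ≤ t * x - s * r := by
    have h1 : s * r ≤ s * (t + s ^ 2 * t / 6) := mul_le_mul_of_nonneg_left hrub hs.le
    have hcube : s ^ 3 ≤ x ^ 3 := by
      nlinarith [mul_nonneg (sub_nonneg.2 hsx) (by positivity : (0:ℝ) ≤ x ^ 2 + x * s + s ^ 2)]
    linarith [h1, mul_le_mul_of_nonneg_right hsx ht.le,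
      mul_le_mul_of_nonneg_right hcube ht.le,
      mul_nonneg (pow_nonneg hx0.le 3) ht.le]
  have hden : 6 / π * x ^ 2 ≤ s * r * (t * x) := by
    have h1 : (2 / π * x) * t ≤ s * r :=
      mul_le_mul hsx2 hrlb ht.le hs.le
    have h2 : ((2 / π * x) * t) * (t * x) ≤ (s * r) * (t * x) :=
      mul_le_mul_of_nonneg_right h1 (mul_nonneg ht.le hx0.le)
    calc 6 / π * x ^ 2 = (2 / π) * 3 * x ^ 2 := by ring
    _ = ((2 / π * x) * t) * (t * x) := by rw [← ht2]; ring
    _ ≤ _ := h2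
  have hdpos : (0:ℝ) < s * r * (t * x) := mul_pos (mul_pos hs hr) (mul_pos ht hx0)
  rw [abs_div, abs_of_pos hdpos, div_le_iff₀ hdpos]
  have habs : |t * x - s * r| ≤ t * x ^ 3 := abs_le.2 ⟨hnlb, hnub⟩
  have hx3 : t * x ^ 3 ≤ 3 * (6 / π * x ^ 2) := by
    have ht4 : t ≤ 2 := by nlinarith [sq_nonneg (t - 2)]
    have htx : t * x ≤ π := by
      linarith [mul_le_mul ht4 hxpi hx0.le (by norm_num : (0:ℝ) ≤ 2)]
    have h5 : t * x ^ 3 ≤ π * x ^ 2 := by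
      linarith [mul_le_mul_of_nonneg_right htx (sq_nonneg x)]
    have h6 : π * x ^ 2 ≤ 18 / π * x ^ 2 := by
      apply mul_le_mul_of_nonneg_right _ (sq_nonneg x)
      rw [le_div_iff₀ hpi]
      nlinarith
    calc t * x ^ 3 ≤ π * x ^ 2 := h5
    _ ≤ 18 / π * x ^ 2 := h6
    _ = 3 * (6 / π * x ^ 2) := by ring
  calc |t * x - s * r| ≤ t * x ^ 3 := habs
  _ ≤ 3 * (6 / π * x ^ 2) := hx3
  _ ≤ 3 * (s * r * (t * x)) := by linarith

open MeasureTheory in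
lemma fI_aesm : AEStronglyMeasurable fI (volume.restrict (Ioc 0 (π/2))) := by
  apply Measurable.aestronglyMeasurable
  unfold fI
  apply Measurable.sub
  · exact (measurable_const.div ((Real.measurable_sin.mul
      ((measurable_const.sub (Real.measurable_cos.pow_const 2)).sqrt))))
  · exact measurable_const.div (measurable_const.mul measurable_id)

open MeasureTheory in
lemma fI_integrableOn : IntegrableOn fI (Ioc 0 (π/2)) volume := by
  apply Integrable.mono' (integrable_const (3:ℝ)) fI_aesm
  rw [ae_restrict_iff' measurableSet_Ioc]
  filter_upwards with x hx
  simpa using fI_bound hx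

lemma fI_intervalIntegrable : IntervalIntegrable fI MeasureTheory.volume 0 (π/2) := by
  have hpi := Real.pi_pos
  rw [intervalIntegrable_iff_integrableOn_Ioc_of_le (by positivity)]
  exact fI_integrableOn

lemma continuousAt_triAntideriv_pi_div_two : ContinuousAt triAntideriv (π/2) := by
  have hpi := Real.pi_pos
  unfold triAntideriv _root_.artanh
  set g : ℝ → ℝ := fun y => Real.sqrt 3 * Real.cos y / Real.sqrt (4 - Real.cos y ^ 2) with hgdef
  have hg0 : g (π/2) = 0 := by simp [hgdef, Real.cos_pi_div_two]
  have hgc : Continuous g := continuous_gfun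
  have hinner : ContinuousAt (fun y => (1 + g y) / (1 - g y)) (π/2) := by
    apply ContinuousAt.div ((continuous_const.add hgc).continuousAt)
      ((continuous_const.sub hgc).continuousAt)
    rw [Pi.sub_apply, hg0]; norm_num
  have hlogc : ContinuousAt (fun y => Real.log ((1 + g y) / (1 - g y))) (π/2) := by
    have h1 : ContinuousAt Real.log ((fun y => (1 + g y) / (1 - g y)) (π/2)) := by
      simp only [hg0]
      exact Real.continuousAt_log (by norm_num)
    simpa [Function.comp_def] using ContinuousAt.comp (g := Real.log) (f := fun y => (1 + g y) / (1 - g y)) (x := π/2) h1 hinner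
  apply ContinuousAt.sub
  · exact (((Real.continuousAt_log (by positivity)).neg).div_const _)
  · exact (hlogc.const_mul _).const_mul _

lemma integral_fI : ∫ x in (0:ℝ)..(π/2), fI x
    = triAntideriv (π/2) - (-Real.log (Real.sqrt 3) / Real.sqrt 3) := by
  have hpi := Real.pi_pos
  exact intervalIntegral.integral_eq_sub_of_hasDerivAt_of_tendsto (by positivity)
    (fun x hx => hasDerivAt_triAntideriv hx) fI_intervalIntegrable
    tendsto_triAntideriv_zero
    (continuousAt_triAntideriv_pi_div_two.tendsto.mono_left nhdsWithin_le_nhds)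

open MeasureTheory FourierTransform in
lemma tendsto_cos_integral :
    Tendsto (fun n : ℕ => ∫ x in (0:ℝ)..(π/2), fI x * Real.cos (2*n*x)) atTop (nhds 0) := by
  have hpi := Real.pi_pos
  set φ : ℝ → ℂ := (Ioc (0:ℝ) (π/2)).indicator (fun x => (fI x : ℂ)) with hφdef
  have hφint : Integrable φ := by
    rw [hφdef, integrable_indicator_iff measurableSet_Ioc]
    exact fI_integrableOn.ofReal
  have key : ∀ w : ℝ, (∫ x in (0:ℝ)..(π/2), fI x * Real.cos (2*π*(x*w))) = (𝓕 φ (-w)).re := by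
    intro w
    have e1 : 𝓕 φ (-w) = ∫ v : ℝ, Complex.exp ((2*π*(v*w) : ℝ) * Complex.I) * φ v := by
      rw [Real.fourier_real_eq]
      congr 1
      ext v
      rw [show (-(v * -w)) = v * w by ring, Circle.smul_def, Real.fourierChar_apply, smul_eq_mul]
    have e2 : (∫ v : ℝ, Complex.exp ((2*π*(v*w) : ℝ) * Complex.I) * φ v)
        = ∫ v in Ioc (0:ℝ) (π/2), Complex.exp ((2*π*(v*w) : ℝ) * Complex.I) * (fI v : ℂ) := by
      rw [← MeasureTheory.integral_indicator measurableSet_Ioc]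
      congr 1
      ext v
      by_cases hv : v ∈ Ioc (0:ℝ) (π/2) <;>
        simp [hφdef, Set.indicator_of_mem, Set.indicator_of_notMem, hv]
    have hint2 : Integrable (fun v => Complex.exp ((2*π*(v*w) : ℝ) * Complex.I) * (fI v : ℂ))
        (volume.restrict (Ioc (0:ℝ) (π/2))) := by
      apply Integrable.bdd_mul fI_integrableOn.ofReal
      · apply Continuous.aestronglyMeasurable
        exact Complex.continuous_exp.comp ((Complex.continuous_ofReal.comp
          (by continuity : Continuous fun v : ℝ => 2*π*(v*w))).mul continuous_const)
      · exact ae_of_all _ fun x => (Complex.norm_exp_ofReal_mul_I _).le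
    rw [e1, e2,
      show (∫ v in Ioc (0:ℝ) (π/2), Complex.exp ((2*π*(v*w) : ℝ) * Complex.I) * (fI v : ℂ)).re
        = ∫ v in Ioc (0:ℝ) (π/2), (Complex.exp ((2*π*(v*w) : ℝ) * Complex.I) * (fI v : ℂ)).re
        from (integral_re hint2).symm]
    rw [intervalIntegral.integral_of_le (by positivity : (0:ℝ) ≤ π/2)]
    congr 1
    ext v
    rw [Complex.mul_re, Complex.exp_ofReal_mul_I_re, Complex.exp_ofReal_mul_I_im,
      Complex.ofReal_re, Complex.ofReal_im]
    ring
  have hseq : Tendsto (fun n : ℕ => -((n : ℝ)/π)) atTop (Filter.cocompact ℝ) := by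
    rw [cocompact_eq_atBot_atTop]
    apply Tendsto.mono_right _ le_sup_left
    exact tendsto_neg_atBot_iff.2 (tendsto_natCast_atTop_atTop.atTop_div_const hpi)
  have hRL : Tendsto (fun n : ℕ => (𝓕 φ (-((n : ℝ)/π))).re) atTop (nhds 0) := by
    have h1 := (Real.zero_at_infty_fourier φ).comp hseq
    have h2 := (Complex.continuous_re.tendsto 0).comp h1
    simpa [Function.comp_def] using h2
  apply hRL.congr
  intro n
  rw [← key ((n : ℝ)/π)]
  refine intervalIntegral.integral_congr fun x _ => ?_
  rw [show 2*π*(x*((n:ℝ)/π)) = 2*(n:ℝ)*x by field_simp]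

theorem limit_integral_correction_term :
    Tendsto triAntideriv (nhdsWithin 0 (Set.Ioi 0))
      (nhds (-Real.log (Real.sqrt 3) / Real.sqrt 3)) ∧
    triAntideriv (π / 2) = -Real.log (π / 2) / Real.sqrt 3 ∧
    (1 / 2) * (triAntideriv (π / 2) - (-Real.log (Real.sqrt 3) / Real.sqrt 3))
      = (1 / (2 * Real.sqrt 3)) * Real.log (2 * Real.sqrt 3 / π) ∧
    Tendsto (fun n : ℕ => ∫ x in (0:ℝ)..(π / 2),
        (1 / (Real.sin x * Real.sqrt (4 - Real.cos x ^ 2)) - 1 / (Real.sqrt 3 * x))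
          * Real.sin (n * x) ^ 2)
      atTop (nhds ((1 / (2 * Real.sqrt 3)) * Real.log (2 * Real.sqrt 3 / π))) := by
  refine ⟨tendsto_triAntideriv_zero, triAntideriv_pi_div_two, half_diff_eq, ?_⟩
  have hpi := Real.pi_pos
  have hsplit : ∀ n : ℕ, (∫ x in (0:ℝ)..(π / 2),
      (1 / (Real.sin x * Real.sqrt (4 - Real.cos x ^ 2)) - 1 / (Real.sqrt 3 * x))
        * Real.sin (n * x) ^ 2)
      = (1/2) * (∫ x in (0:ℝ)..(π/2), fI x)
        - (1/2) * (∫ x in (0:ℝ)..(π/2), fI x * Real.cos (2*n*x)) := by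
    intro n
    have hint1 : IntervalIntegrable fI MeasureTheory.volume 0 (π/2) := fI_intervalIntegrable
    have hint2 : IntervalIntegrable (fun x => fI x * Real.cos (2*n*x))
        MeasureTheory.volume 0 (π/2) :=
      hint1.mul_continuousOn (Continuous.continuousOn (by continuity))
    have heq : ∀ x, (1 / (Real.sin x * Real.sqrt (4 - Real.cos x ^ 2))
          - 1 / (Real.sqrt 3 * x)) * Real.sin (n * x) ^ 2
        = (1/2) * fI x - (1/2) * (fI x * Real.cos (2*n*x)) := by
      intro x
      rw [Real.sin_sq_eq_half_sub]
      unfold fI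
      rw [show 2 * ((n:ℝ) * x) = 2 * n * x by ring]
      ring
    rw [intervalIntegral.integral_congr (fun x _ => heq x)]
    rw [intervalIntegral.integral_sub (hint1.const_mul _) (hint2.const_mul _),
      intervalIntegral.integral_const_mul, intervalIntegral.integral_const_mul]
  simp_rw [hsplit]
  have hlim : Tendsto (fun n : ℕ => (1/2) * (∫ x in (0:ℝ)..(π/2), fI x)
      - (1/2) * (∫ x in (0:ℝ)..(π/2), fI x * Real.cos (2*n*x))) atTop
      (nhds ((1/2) * (∫ x in (0:ℝ)..(π/2), fI x) - (1/2) * 0)) :=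
    tendsto_const_nhds.sub (tendsto_cos_integral.const_mul (1/2))
  have : (1/2) * (∫ x in (0:ℝ)..(π/2), fI x) - (1/2) * 0
      = (1 / (2 * Real.sqrt 3)) * Real.log (2 * Real.sqrt 3 / π) := by
    rw [integral_fI, mul_zero, sub_zero]
    exact half_diff_eq
  rwa [this] at hlim
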